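/- arXiv:2410.02559 — 5 statements merged into one kernel-verified Lean document; each statement's English description precedes it below -/
import Mathlib

section
/- Let d ≥ 1 and let F : ℝ^d → ℝ be convex and attain its minimum at a point x*. Let K ∈ (0,1), δ ∈ ℝ, E ≥ 0, γ₀ > 0, and let Δ ≥ 0, Θ ≥ 0 satisfy F(x₀) − F(x*) ≤ Δ and ‖x₀ − x*‖² ≤ Θ. For s ≥ 0 set γ_s = K^{s/2}·γ₀ and F^{(γ_s)}(x) = F(x) + (γ_s/2)‖x − x₀‖², and let x_s* be the (unique) minimizer of F^{(γ_s)}. Suppose a sequence (x_s)_{s≥0} starts at the given x₀ and satisfies, for every s ≥ 0, F^{(γ_s)}(x_{s+1}) − F^{(γ_s)}(x_s*) − δ ≤ K·(F^{(γ_s)}(x_s) − F^{(γ_s)}(x_s*) − δ) + E. Then for every integer S ≥ 1, F(x_S) − F(x*) ≤ δ + K^S·(Δ − δ) + (1/2 + 2/√K)·K^{S/2}·γ₀·Θ + E/(1 − K). -/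
noncomputable section

set_option maxHeartbeats 1000000 in
/-- **AdaptRdct-C convergence (deterministic form).**
At stage `s`, the convex objective `F` is replaced by the regularized objective
`F^(γ_s) y = F y + γ_s/2 * ‖y - x 0‖²` with `γ s = (√K)^s * γ₀`, whose minimizer is `xmin s`.
The inner solver satisfies the ZOOD-type decrease inequality with errors `δ` and `Err`. -/
theorem stmt0 (d : ℕ) (hd : 1 ≤ d)
    (F : EuclideanSpace ℝ (Fin d) → ℝ)
    (hF : ConvexOn ℝ Set.univ F)
    (xstar : EuclideanSpace ℝ (Fin d)) (hxstar : ∀ y, F xstar ≤ F y)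
    (K δ Err γ0 Δ Θ : ℝ)
    (hK0 : 0 < K) (hK1 : K < 1) (hErr : 0 ≤ Err) (hγ0 : 0 < γ0)
    (hΔ0 : 0 ≤ Δ) (hΘ0 : 0 ≤ Θ)
    (x : ℕ → EuclideanSpace ℝ (Fin d))
    (hΔ : F (x 0) - F xstar ≤ Δ) (hΘ : ‖x 0 - xstar‖ ^ 2 ≤ Θ)
    (γ : ℕ → ℝ) (hγ : ∀ s, γ s = Real.sqrt K ^ s * γ0)
    (xmin : ℕ → EuclideanSpace ℝ (Fin d))
    (hxmin : ∀ s, ∀ y, F (xmin s) + γ s / 2 * ‖xmin s - x 0‖ ^ 2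
      ≤ F y + γ s / 2 * ‖y - x 0‖ ^ 2)
    (hrec : ∀ s,
      (F (x (s + 1)) + γ s / 2 * ‖x (s + 1) - x 0‖ ^ 2)
          - (F (xmin s) + γ s / 2 * ‖xmin s - x 0‖ ^ 2) - δ
        ≤ K * ((F (x s) + γ s / 2 * ‖x s - x 0‖ ^ 2)
              - (F (xmin s) + γ s / 2 * ‖xmin s - x 0‖ ^ 2) - δ) + Err) :
    ∀ S : ℕ, 1 ≤ S →
      F (x S) - F xstar
        ≤ δ + K ^ S * (Δ - δ)
          + (1 / 2 + 2 / Real.sqrt K) * Real.sqrt K ^ S * γ0 * Θ + Err / (1 - K) := by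
  intro S _hS
  set q := Real.sqrt K with hqdef
  have hq0 : 0 < q := Real.sqrt_pos.mpr hK0
  have hqK : q ^ 2 = K := Real.sq_sqrt hK0.le
  have hq1 : q < 1 := by nlinarith
  have h1K : 0 < 1 - K := by linarith
  set c : ℝ := γ0 * Θ / (2 * q) with hcdef
  have hc0 : 0 ≤ c := by positivity
  have hcq : c * q = γ0 * Θ / 2 := by
    rw [hcdef, div_mul_eq_mul_div, div_eq_div_iff (by positivity) (by positivity)]; ring
  set E' : ℝ := Err / (1 - K) with hE'def
  have hE : Err = (1 - K) * E' := by
    rw [hE'def, mul_div_assoc', eq_div_iff h1K.ne']; ring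
  have hE0 : 0 ≤ E' := div_nonneg hErr h1K.le
  have hγpos : ∀ s, 0 < γ s := by
    intro s; rw [hγ]; positivity
  have hΘmin : ∀ s, ‖xmin s - x 0‖ ^ 2 ≤ Θ := by
    intro s
    have h1 := hxmin s xstar
    have h2 := hxstar (xmin s)
    have h3 : ‖xstar - x 0‖ ^ 2 ≤ Θ := by rw [norm_sub_rev]; exact hΘ
    have h4 := hγpos s
    nlinarith
  have key : ∀ s,
      (F (x (s+1)) + γ (s+1)/2*‖x (s+1) - x 0‖^2)
        - (F (xmin (s+1)) + γ (s+1)/2*‖xmin (s+1) - x 0‖^2)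
      ≤ K * ((F (x s) + γ s/2*‖x s - x 0‖^2) - (F (xmin s) + γ s/2*‖xmin s - x 0‖^2))
          + (1-K)*δ + Err + q^s*γ0*(1-q)/2*Θ := by
    intro s
    have h1 := hrec s
    have h2 := hxmin s (xmin (s+1))
    have h3 : γ (s+1) = q * (q^s * γ0) := by rw [hγ, pow_succ]; ring
    have h4 := hΘmin (s+1)
    have h5 : (0:ℝ) ≤ ‖x (s+1) - x 0‖^2 := sq_nonneg _
    have h6 := hγpos s
    have hγs : γ s = q^s * γ0 := hγ s
    have hq1' : (0:ℝ) ≤ 1 - q := by linarith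
    have hA : 0 ≤ (1-q) * (q^s*γ0) * ‖x (s+1) - x 0‖^2 :=
      mul_nonneg (mul_nonneg hq1' (by positivity)) h5
    have hB : (1-q) * (q^s*γ0) * ‖xmin (s+1) - x 0‖^2 ≤ (1-q) * (q^s*γ0) * Θ :=
      mul_le_mul_of_nonneg_left h4 (mul_nonneg hq1' (by positivity))
    rw [hγs] at h1 h2
    rw [hγs, h3]
    linarith
  have main : ∀ s,
      (F (x s) + γ s/2*‖x s - x 0‖^2) - (F (xmin s) + γ s/2*‖xmin s - x 0‖^2)
        ≤ K^s*Δ + (1-K^s)*δ + (1-K^s)*E' + c*q^s := by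
    intro s
    induction s with
    | zero =>
      have h0 : x 0 - x 0 = (0 : EuclideanSpace ℝ (Fin d)) := sub_self _
      have h1 := hxstar (xmin 0)
      have h2 : (0:ℝ) ≤ ‖xmin 0 - x 0‖^2 := sq_nonneg _
      have h3 := (hγpos 0).le
      simp only [h0, norm_zero, pow_zero]
      have h4 : 0 ≤ γ 0 / 2 * ‖xmin 0 - x 0‖^2 := by positivity
      nlinarith
    | succ s ih =>
      have k := key s
      have hKih := mul_le_mul_of_nonneg_left ih hK0.le
      have hcid : c * (q^s*q) = K*(c*q^s) + q^s*γ0*(1-q)/2*Θ := by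
        rw [← hqK]
        linear_combination (q^s*(1-q)) * hcq
      rw [pow_succ K s, pow_succ q s]
      linarith [k, hKih, hcid]
  have hm := main S
  have h1 := hxmin S xstar
  have h3 : ‖xstar - x 0‖^2 ≤ Θ := by rw [norm_sub_rev]; exact hΘ
  have h4 := hγpos S
  have hγS : γ S = q^S * γ0 := hγ S
  have h2' : (0:ℝ) ≤ γ S/2 * ‖x S - x 0‖^2 := by positivity
  have h5 : γ S/2 * ‖xstar - x 0‖^2 ≤ γ S/2 * Θ :=
    mul_le_mul_of_nonneg_left h3 (by positivity)
  rw [hγS] at hm h1 h2' h5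
  have hqS : (0:ℝ) ≤ q^S := pow_nonneg hq0.le S
  have hKS : (0:ℝ) ≤ K^S := pow_nonneg hK0.le S
  have hKSE : 0 ≤ K^S * E' := mul_nonneg hKS hE0
  have hfin : c*q^S + q^S*γ0*Θ/2 ≤ (1/2 + 2/q)*q^S*γ0*Θ := by
    have hdiff : (1/2 + 2/q)*q^S*γ0*Θ - (c*q^S + q^S*γ0*Θ/2) = (3/(2*q))*(q^S*γ0*Θ) := by
      rw [hcdef]; field_simp; ring
    nlinarith [mul_nonneg (by positivity : (0:ℝ) ≤ 3/(2*q)) (by positivity : (0:ℝ) ≤ q^S*γ0*Θ)]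
  linarith [hm, h1, h2', h5, hfin, hKSE]
end
end

section
/- Let d ≥ 1 and let F : ℝ^d → ℝ be convex and attain its minimum at x*. Let K ∈ (0,1), δ ∈ ℝ, E ≥ 0, γ₀ > 0, Δ ≥ F(x₀) − F(x*), Θ ≥ ‖x₀ − x*‖², and let (x_s) satisfy the AdaptRdct-C recursion: with γ_s = K^{s/2}γ₀, F^{(γ_s)}(x) = F(x) + (γ_s/2)‖x − x₀‖² having minimizer x_s*, one has F^{(γ_s)}(x_{s+1}) − F^{(γ_s)}(x_s*) − δ ≤ K·(F^{(γ_s)}(x_s) − F^{(γ_s)}(x_s*) − δ) + E for all s ≥ 0. Then for any ε > 0 and any integer S ≥ 1 such that K^S·(Δ − δ) ≤ ε/2 and (1/2 + 2/√K)·K^{S/2}·γ₀·Θ ≤ ε/2, it holds that F(x_S) − F(x*) ≤ δ + E/(1 − K) + ε. -/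
noncomputable section

set_option maxHeartbeats 1000000 in
/-- **AdaptRdct-C needs only `S = O(log(1/ε))` stages**: under the AdaptRdct-C recursion,
as soon as `K^S (Δ - δ) ≤ ε/2` and `(1/2 + 2/√K) (√K)^S γ₀ Θ ≤ ε/2`, the iterate `x S`
is within `ε` of the system error `δ + Err/(1-K)`. -/
theorem stmt2 (d : ℕ) (hd : 1 ≤ d)
    (F : EuclideanSpace ℝ (Fin d) → ℝ)
    (hF : ConvexOn ℝ Set.univ F)
    (xstar : EuclideanSpace ℝ (Fin d)) (hxstar : ∀ y, F xstar ≤ F y)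
    (K δ Err γ0 Δ Θ : ℝ)
    (hK0 : 0 < K) (hK1 : K < 1) (hErr : 0 ≤ Err) (hγ0 : 0 < γ0)
    (x : ℕ → EuclideanSpace ℝ (Fin d))
    (hΔ : F (x 0) - F xstar ≤ Δ) (hΘ : ‖x 0 - xstar‖ ^ 2 ≤ Θ)
    (γ : ℕ → ℝ) (hγ : ∀ s, γ s = Real.sqrt K ^ s * γ0)
    (xmin : ℕ → EuclideanSpace ℝ (Fin d))
    (hxmin : ∀ s, ∀ y, F (xmin s) + γ s / 2 * ‖xmin s - x 0‖ ^ 2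
      ≤ F y + γ s / 2 * ‖y - x 0‖ ^ 2)
    (hrec : ∀ s,
      (F (x (s + 1)) + γ s / 2 * ‖x (s + 1) - x 0‖ ^ 2)
          - (F (xmin s) + γ s / 2 * ‖xmin s - x 0‖ ^ 2) - δ
        ≤ K * ((F (x s) + γ s / 2 * ‖x s - x 0‖ ^ 2)
              - (F (xmin s) + γ s / 2 * ‖xmin s - x 0‖ ^ 2) - δ) + Err) :
    ∀ ε : ℝ, 0 < ε → ∀ S : ℕ, 1 ≤ S →
      K ^ S * (Δ - δ) ≤ ε / 2 →
      (1 / 2 + 2 / Real.sqrt K) * Real.sqrt K ^ S * γ0 * Θ ≤ ε / 2 →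
      F (x S) - F xstar ≤ δ + Err / (1 - K) + ε := by
  intro ε hε S hS hε1 hε2
  set sK := Real.sqrt K with hsKdef
  have hsK0 : 0 < sK := Real.sqrt_pos.2 hK0
  have hsq : sK ^ 2 = K := Real.sq_sqrt hK0.le
  have hsK1 : sK < 1 := by nlinarith
  have hΘ0 : 0 ≤ Θ := le_trans (sq_nonneg _) hΘ
  have h1K : 0 < 1 - K := by linarith
  have hγpos : ∀ s, 0 < γ s := fun s => by
    rw [hγ s]; positivity
  have hγdec : ∀ s, γ (s + 1) = sK * γ s := fun s => by
    rw [hγ s, hγ (s + 1)]; ring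
  have hrev : ‖xstar - x 0‖ = ‖x 0 - xstar‖ := norm_sub_rev _ _
  -- the minimizers stay within distance² Θ of x 0
  have hxminΘ : ∀ s, ‖xmin s - x 0‖ ^ 2 ≤ Θ := by
    intro s
    have h := hxmin s xstar
    rw [hrev] at h
    have h2 := hxstar (xmin s)
    have hγp := hγpos s
    have key : ‖xmin s - x 0‖ ^ 2 ≤ ‖x 0 - xstar‖ ^ 2 := by nlinarith
    linarith
  -- the stage gap
  obtain ⟨b, hbdef⟩ : ∃ b : ℕ → ℝ, ∀ s, b s = F (x s) + γ s / 2 * ‖x s - x 0‖ ^ 2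
      - (F (xmin s) + γ s / 2 * ‖xmin s - x 0‖ ^ 2) - δ :=
    ⟨fun s => F (x s) + γ s / 2 * ‖x s - x 0‖ ^ 2
      - (F (xmin s) + γ s / 2 * ‖xmin s - x 0‖ ^ 2) - δ, fun s => rfl⟩
  have hb0 : b 0 ≤ Δ - δ := by
    rw [hbdef 0]
    have hz : ‖x 0 - x 0‖ ^ 2 = 0 := by simp
    have h2 := hxstar (xmin 0)
    have h3 : 0 ≤ γ 0 / 2 * ‖xmin 0 - x 0‖ ^ 2 :=
      mul_nonneg (by linarith [hγpos 0]) (sq_nonneg _)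
    rw [hz]
    nlinarith
  -- one-step recursion for b
  have hstep : ∀ s, b (s + 1) ≤ K * b s + Err + (γ s - γ (s + 1)) / 2 * Θ := by
    intro s
    have hr := hrec s
    have hm := hxmin s (xmin (s + 1))
    have hγd : 0 ≤ γ s - γ (s + 1) := by
      rw [hγdec s]
      have := hγpos s
      nlinarith
    rw [← hbdef s] at hr
    have hB := hxminΘ (s + 1)
    have fA : γ (s + 1) / 2 * ‖x (s + 1) - x 0‖ ^ 2 ≤ γ s / 2 * ‖x (s + 1) - x 0‖ ^ 2 :=
      mul_le_mul_of_nonneg_right (by linarith) (sq_nonneg _)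
    have fB : γ s / 2 * ‖xmin (s + 1) - x 0‖ ^ 2 - γ (s + 1) / 2 * ‖xmin (s + 1) - x 0‖ ^ 2
        ≤ (γ s - γ (s + 1)) / 2 * Θ := by
      have e1 : γ s / 2 * ‖xmin (s + 1) - x 0‖ ^ 2 - γ (s + 1) / 2 * ‖xmin (s + 1) - x 0‖ ^ 2
          = (γ s - γ (s + 1)) / 2 * ‖xmin (s + 1) - x 0‖ ^ 2 := by ring
      rw [e1]
      exact mul_le_mul_of_nonneg_left hB (by linarith)
    rw [hbdef (s + 1)]
    linarith
  -- closed-form bound by induction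
  set c := γ0 * Θ / (2 * sK) with hc
  have hc0 : 0 ≤ c := by positivity
  have hErrK : 0 ≤ Err / (1 - K) := by positivity
  have hbound : ∀ n, b n ≤ K ^ n * (Δ - δ) + Err / (1 - K) + c * sK ^ n := by
    intro n
    induction n with
    | zero => simpa using by linarith
    | succ n ih =>
      have hs := hstep n
      have hmul : K * b n ≤ K * (K ^ n * (Δ - δ) + Err / (1 - K) + c * sK ^ n) :=
        mul_le_mul_of_nonneg_left ih hK0.le
      have h1Kne : (1 : ℝ) - K ≠ 0 := ne_of_gt h1K
      have eErr : K * (Err / (1 - K)) + Err = Err / (1 - K) := by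
        field_simp
        ring
      have eC : K * (c * sK ^ n) + (γ n - γ (n + 1)) / 2 * Θ = c * sK ^ (n + 1) := by
        rw [hγdec n, hγ n, hc, ← hsq]
        field_simp
        ring
      have heq : K * (K ^ n * (Δ - δ) + Err / (1 - K) + c * sK ^ n) + Err
          + (γ n - γ (n + 1)) / 2 * Θ
          = K ^ (n + 1) * (Δ - δ) + Err / (1 - K) + c * sK ^ (n + 1) := by
        rw [pow_succ]
        linarith [eErr, eC]
      linarith
  -- final assembly
  have hbS := hbound S
  have hfin : F (x S) - F xstar ≤ b S + δ + γ S / 2 * Θ := by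
    have h1 := hxmin S xstar
    rw [hrev] at h1
    have hγS2 : (0:ℝ) ≤ γ S / 2 := by linarith [hγpos S]
    have h2 := mul_le_mul_of_nonneg_left hΘ hγS2
    have h3 : 0 ≤ γ S / 2 * ‖x S - x 0‖ ^ 2 := mul_nonneg hγS2 (sq_nonneg _)
    rw [hbdef S]
    linarith
  have hγSval : γ S / 2 * Θ = sK ^ S * γ0 * Θ / 2 := by rw [hγ S]; ring
  have hx : (0:ℝ) ≤ sK ^ S * γ0 * Θ := by positivity
  have hdiff : (1 / 2 + 2 / sK) * sK ^ S * γ0 * Θ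
      - (c * sK ^ S + sK ^ S * γ0 * Θ / 2) = 3 / (2 * sK) * (sK ^ S * γ0 * Θ) := by
    rw [hc]; field_simp; ring
  have hterm : c * sK ^ S + sK ^ S * γ0 * Θ / 2 ≤ ε / 2 := by
    have h4 : 0 ≤ 3 / (2 * sK) * (sK ^ S * γ0 * Θ) := by positivity
    linarith
  linarith
end
end

section
/- Let σ > 0 and let F : ℝ^d → ℝ be σ-weakly convex; set λ = 1/(2σ). Fix x̄ ∈ ℝ^d, let x̂ = prox_{λF}(x̄) be the minimizer of F̂(x) := F(x) + σ‖x − x̄‖², and let K ∈ (0,1), δ ≥ 0, E ≥ 0. If x' ∈ ℝ^d satisfies F̂(x') − F̂(x̂) − δ ≤ K·(F̂(x̄) − F̂(x̂) − δ) + E, then (λ/4)·‖(x̄ − x̂)/λ‖² ≤ ((2K+1)/(1−K))·(F(x̄) − F(x')) + 3δ + 3E/(1−K); equivalently, (λ/4)‖∇F_λ(x̄)‖² ≤ ((2K+1)/(1−K))(F(x̄) − F(x')) + 3δ + 3E/(1−K). -/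
set_option maxHeartbeats 1000000


noncomputable section

/-- **Per-stage bound in the AdaptRdct-NC analysis.**
`F` is `σ`-weakly convex, `lam = 1/(2σ)`, `xhat = prox_{lam F}(xbar)` is the minimizer of
`F̂ z = F z + σ‖z - xbar‖²`, and `x'` satisfies the ZOOD-type decrease inequality starting
from `xbar`.  Then the squared Moreau-envelope gradient `‖(xbar - xhat)/lam‖²` is controlled. -/
theorem stmt4 (d : ℕ) (σ : ℝ) (hσ : 0 < σ)
    (F : EuclideanSpace ℝ (Fin d) → ℝ)
    (hweak : ConvexOn ℝ Set.univ (fun y => F y + σ / 2 * ‖y‖ ^ 2))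
    (lam : ℝ) (hlam : lam = 1 / (2 * σ))
    (xbar xhat : EuclideanSpace ℝ (Fin d))
    (hxhat : ∀ z, F xhat + σ * ‖xhat - xbar‖ ^ 2 ≤ F z + σ * ‖z - xbar‖ ^ 2)
    (K δ Err : ℝ) (hK0 : 0 < K) (hK1 : K < 1) (hδ : 0 ≤ δ) (hErr : 0 ≤ Err)
    (x' : EuclideanSpace ℝ (Fin d))
    (hzood : (F x' + σ * ‖x' - xbar‖ ^ 2) - (F xhat + σ * ‖xhat - xbar‖ ^ 2) - δ
      ≤ K * (F xbar - (F xhat + σ * ‖xhat - xbar‖ ^ 2) - δ) + Err) :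
    lam / 4 * ‖(1 / lam) • (xbar - xhat)‖ ^ 2
      ≤ (2 * K + 1) / (1 - K) * (F xbar - F x') + 3 * δ + 3 * Err / (1 - K) := by
  have hK' : (0:ℝ) < 1 - K := by linarith
  have hq : (0:ℝ) ≤ ‖xhat - xbar‖ ^ 2 := by positivity
  have hs : (0:ℝ) ≤ ‖x' - xbar‖ ^ 2 := by positivity
  -- strong convexity key step, for each t ∈ (0,1]
  have key : ∀ t : ℝ, 0 < t → t ≤ 1 →
      F xhat + σ * (3/2 - t/2) * ‖xhat - xbar‖ ^ 2 ≤ F xbar := by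
    intro t ht0 ht1
    have hc := hweak.2 (Set.mem_univ xhat) (Set.mem_univ xbar)
      (by linarith : (0:ℝ) ≤ 1 - t) ht0.le (by ring)
    simp only [smul_eq_mul] at hc
    set z : EuclideanSpace ℝ (Fin d) := (1 - t) • xhat + t • xbar with hz
    have hmin := hxhat z
    have hzv : z - xbar = (1 - t) • (xhat - xbar) := by
      rw [hz]; module
    have e1 : ‖z‖ ^ 2 = (1-t)^2 * ‖xhat‖^2 + 2*((1-t)*t)*(inner ℝ xhat xbar : ℝ)
        + t^2 * ‖xbar‖^2 := by
      rw [hz, norm_add_sq_real, norm_smul, norm_smul, real_inner_smul_left,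
        real_inner_smul_right, Real.norm_eq_abs, Real.norm_eq_abs,
        abs_of_nonneg (by linarith : (0:ℝ) ≤ 1 - t), abs_of_nonneg ht0.le]
      ring
    have e2 : ‖xhat - xbar‖ ^ 2 = ‖xhat‖^2 - 2*(inner ℝ xhat xbar : ℝ) + ‖xbar‖^2 := by
      rw [norm_sub_sq_real]
    have e3 : ‖z - xbar‖ ^ 2 = (1-t)^2 * ‖xhat - xbar‖ ^ 2 := by
      rw [hzv, norm_smul, Real.norm_eq_abs, abs_of_nonneg (by linarith : (0:ℝ) ≤ 1 - t)]
      ring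
    rw [e3, e2] at hmin
    rw [e1] at hc
    have h4 : t * (F xhat + σ * (3/2 - t/2) * (‖xhat‖^2 - 2*(inner ℝ xhat xbar : ℝ) + ‖xbar‖^2)) ≤ t * F xbar := by
      nlinarith [hmin, hc]
    rw [e2]
    exact le_of_mul_le_mul_left h4 ht0
  -- take t → 0
  have strong : F xhat + σ * (3/2) * ‖xhat - xbar‖ ^ 2 ≤ F xbar := by
    by_cases hq0 : ‖xhat - xbar‖ ^ 2 = 0
    · have := key 1 one_pos le_rfl
      rw [hq0] at *
      linarith [key 1 one_pos le_rfl]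
    · have hqpos : 0 < ‖xhat - xbar‖ ^ 2 := lt_of_le_of_ne hq (Ne.symm hq0)
      refine le_of_forall_pos_le_add ?_
      intro ε hε
      set t : ℝ := min 1 (ε / (σ * ‖xhat - xbar‖ ^ 2)) with ht
      have htpos : 0 < t := lt_min one_pos (by positivity)
      have ht1 : t ≤ 1 := min_le_left _ _
      have hk := key t htpos ht1
      have ht2 : t * (σ * ‖xhat - xbar‖ ^ 2) ≤ ε := by
        have : t ≤ ε / (σ * ‖xhat - xbar‖ ^ 2) := min_le_right _ _
        calc t * (σ * ‖xhat - xbar‖ ^ 2)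
            ≤ (ε / (σ * ‖xhat - xbar‖ ^ 2)) * (σ * ‖xhat - xbar‖ ^ 2) := by
              apply mul_le_mul_of_nonneg_right this (by positivity)
          _ = ε := by rw [div_mul_cancel₀ _ (mul_pos hσ hqpos).ne']
      nlinarith [hk, ht2]
  -- rewrite the LHS
  have hlampos : 0 < lam := by rw [hlam]; positivity
  have lhs_eq : lam / 4 * ‖(1 / lam) • (xbar - xhat)‖ ^ 2
      = σ / 2 * ‖xhat - xbar‖ ^ 2 := by
    rw [norm_smul, Real.norm_eq_abs, abs_of_nonneg (by positivity : (0:ℝ) ≤ 1/lam),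
      norm_sub_rev, hlam]
    field_simp
    ring
  rw [lhs_eq]
  have hrhs : (2 * K + 1) / (1 - K) * (F xbar - F x') + 3 * δ + 3 * Err / (1 - K)
      = ((2*K+1) * (F xbar - F x') + 3 * (1-K) * δ + 3 * Err) / (1 - K) := by
    field_simp
  rw [hrhs, le_div_iff₀ hK']
  set a : ℝ := F xbar - F xhat - σ * ‖xhat - xbar‖ ^ 2 with ha
  have ha2 : σ / 2 * ‖xhat - xbar‖ ^ 2 ≤ a := by
    rw [ha]; nlinarith [strong]
  have ha0 : 0 ≤ a := le_trans (by positivity) ha2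
  have h6 : (1-K)*a - (1-K)*δ - Err ≤ F xbar - F x' := by
    nlinarith [hzood, mul_nonneg hσ.le hs]
  have h7 : 0 ≤ (2*K+1) * ((F xbar - F x') - ((1-K)*a - (1-K)*δ - Err)) :=
    mul_nonneg (by linarith) (by linarith)
  have hB : 0 ≤ (1-K) * (a - σ/2 * ‖xhat - xbar‖ ^ 2) :=
    mul_nonneg hK'.le (by linarith)
  have hE : 0 ≤ K * ((1-K) * a) := mul_nonneg hK0.le (mul_nonneg hK'.le ha0)
  have hF : 0 ≤ (1-K)^2 * δ := mul_nonneg (sq_nonneg _) hδ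
  have hG : 0 ≤ (1-K) * Err := mul_nonneg hK'.le hErr
  nlinarith [h7, hB, hE, hF, hG]
end
end

section
/- Let f, r : ℝ^d → ℝ with r convex, let L > 0, μ > 0, and let f_μ : ℝ^d → ℝ be a convex, differentiable, L-smooth function satisfying |f_μ(z) − f(z)| ≤ Lμ²/2 for all z ∈ ℝ^d. Set F = f + r. Let 0 < η ≤ 1/L, let v ∈ ℝ^d, x ∈ ℝ^d, x⁺ = prox_{ηr}(x − ηv), g = (x − x⁺)/η, and Δ = v − ∇f_μ(x). Then for every y ∈ ℝ^d: F(y) ≥ F(x⁺) + ⟨g, y − x⟩ + (η/2)‖g‖² + ⟨Δ, x⁺ − y⟩ − Lμ². -/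
open scoped RealInnerProductSpace

noncomputable section

/-- If `a ≤ t * c` for all `t ∈ (0, 1]`, then `a ≤ 0`. -/
private lemma small_t_aux {a c : ℝ} (h : ∀ t : ℝ, 0 < t → t ≤ 1 → a ≤ t * c) : a ≤ 0 := by
  rcases le_or_gt c 0 with hc | hc
  · have h1 := h 1 one_pos le_rfl
    nlinarith
  · refine le_of_forall_pos_le_add ?_
    intro ε hε
    rcases le_or_gt c ε with hce | hce
    · have h1 := h 1 one_pos le_rfl
      linarith
    · have ht : (0:ℝ) < ε / c := div_pos hε hc
      have ht1 : ε / c ≤ 1 := by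
        rw [div_le_one hc]; linarith
      have h2 := h (ε / c) ht ht1
      have h3 : ε / c * c = ε := by field_simp
      linarith [h3 ▸ h2]

set_option maxHeartbeats 1000000 in
/-- **Key descent lemma for an inexact zeroth-order proximal gradient step.**
Here `fμ` plays the role of the ball-smoothing of `f`: it is convex, differentiable,
`L`-smooth, and `‖fμ - f‖_∞ ≤ L μ²/2`.  With `x⁺ = prox_{η r}(x - η v)`,
`g = (x - x⁺)/η` and `Δ = v - ∇fμ(x)`, the inexact descent inequality holds. -/
theorem stmt14 (d : ℕ)
    (f r : EuclideanSpace ℝ (Fin d) → ℝ)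
    (hr : ConvexOn ℝ Set.univ r)
    (L μ : ℝ) (hL : 0 < L) (hμ : 0 < μ)
    (fμ : EuclideanSpace ℝ (Fin d) → ℝ)
    (hfμconv : ConvexOn ℝ Set.univ fμ)
    (hfμdiff : Differentiable ℝ fμ)
    (hfμsmooth : ∀ x y, |fμ y - fμ x - ⟪gradient fμ x, y - x⟫| ≤ L / 2 * ‖y - x‖ ^ 2)
    (hfμclose : ∀ z, |fμ z - f z| ≤ L * μ ^ 2 / 2)
    (F : EuclideanSpace ℝ (Fin d) → ℝ) (hF : F = fun z => f z + r z)
    (η : ℝ) (hη0 : 0 < η) (hηL : η ≤ 1 / L)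
    (v x xplus g Δ : EuclideanSpace ℝ (Fin d))
    (hxplus : ∀ z, r xplus + 1 / (2 * η) * ‖xplus - (x - η • v)‖ ^ 2
      ≤ r z + 1 / (2 * η) * ‖z - (x - η • v)‖ ^ 2)
    (hg : g = (1 / η) • (x - xplus))
    (hΔ : Δ = v - gradient fμ x) :
    ∀ y, F y ≥ F xplus + ⟪g, y - x⟫ + η / 2 * ‖g‖ ^ 2 + ⟪Δ, xplus - y⟫ - L * μ ^ 2 := by
  intro y
  have hηne : η ≠ 0 := hη0.ne'
  -- x - xplus = η • g
  have hxg : η • g = x - xplus := by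
    rw [hg, smul_smul, mul_one_div, div_self hηne, one_smul]
  -- x - η • v - xplus = η • (g - v)
  have hwv : x - η • v - xplus = η • (g - v) := by
    rw [smul_sub, hxg]; abel
  -- gradient lower bound from convexity + smoothness
  have hgrad : ∀ p q : EuclideanSpace ℝ (Fin d),
      fμ p + ⟪gradient fμ p, q - p⟫ ≤ fμ q := by
    intro p q
    have key : fμ p + ⟪gradient fμ p, q - p⟫ - fμ q ≤ 0 := by
      apply small_t_aux (c := L / 2 * ‖q - p‖ ^ 2)
      intro t ht ht1
      have hmp : (p + t • (q - p)) - p = t • (q - p) := by abel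
      have hsm := hfμsmooth p (p + t • (q - p))
      rw [hmp, real_inner_smul_right] at hsm
      have hns : ‖t • (q - p)‖ ^ 2 = t ^ 2 * ‖q - p‖ ^ 2 := by
        rw [norm_smul, mul_pow, Real.norm_eq_abs, sq_abs]
      rw [hns] at hsm
      have hlow : fμ p + t * ⟪gradient fμ p, q - p⟫ - L / 2 * (t ^ 2 * ‖q - p‖ ^ 2)
          ≤ fμ (p + t • (q - p)) := by
        have := (abs_le.mp hsm).1
        linarith
      have hcm : p + t • (q - p) = (1 - t) • p + t • q := by module
      have hconv := hfμconv.2 (Set.mem_univ p) (Set.mem_univ q)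
        (by linarith : (0:ℝ) ≤ 1 - t) ht.le (by ring)
      rw [← hcm] at hconv
      simp only [smul_eq_mul] at hconv
      have h2 : t * (fμ p + ⟪gradient fμ p, q - p⟫ - fμ q)
          ≤ t * (t * (L / 2 * ‖q - p‖ ^ 2)) := by linarith [hlow, hconv]
      exact (mul_le_mul_iff_right₀ ht).mp h2
    linarith
  -- subgradient inequality for r at the prox point
  have hrsub : ∀ z : EuclideanSpace ℝ (Fin d),
      r xplus + ⟪g - v, z - xplus⟫ ≤ r z := by
    intro z
    have key : η * (r xplus) + η * ⟪g - v, z - xplus⟫ - η * (r z) ≤ 0 := by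
      apply small_t_aux (c := ‖z - xplus‖ ^ 2 / 2)
      intro t ht ht1
      have hconv := hr.2 (Set.mem_univ xplus) (Set.mem_univ z)
        (by linarith : (0:ℝ) ≤ 1 - t) ht.le (by ring)
      simp only [smul_eq_mul] at hconv
      have hz := hxplus ((1 - t) • xplus + t • z)
      have hexp : ‖((1 - t) • xplus + t • z) - (x - η • v)‖ ^ 2
          = ‖xplus - (x - η • v)‖ ^ 2
            + 2 * t * ⟪xplus - (x - η • v), z - xplus⟫ + t ^ 2 * ‖z - xplus‖ ^ 2 := by
        rw [show ((1 - t) • xplus + t • z) - (x - η • v)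
              = (xplus - (x - η • v)) + t • (z - xplus) by module,
          norm_add_sq_real, real_inner_smul_right, norm_smul, mul_pow, Real.norm_eq_abs,
          sq_abs]
        ring
      rw [hexp] at hz
      -- inner products relation
      have hiw : ⟪xplus - (x - η • v), z - xplus⟫ = -(η * ⟪g - v, z - xplus⟫) := by
        have h6 : xplus - (x - η • v) = -(η • (g - v)) := by rw [← hwv]; abel
        rw [h6, inner_neg_left, real_inner_smul_left]
      rw [hiw] at hz
      have e1 : ∀ J : ℝ, 1 / (2 * η) * (2 * t * -(η * J)) = -(t * J) := by
        intro J; field_simp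
      have h1 : t * r xplus + t * ⟪g - v, z - xplus⟫ - t * r z
          ≤ 1 / (2 * η) * (t ^ 2 * ‖z - xplus‖ ^ 2) := by
        linarith [hz, hconv, e1 ⟪g - v, z - xplus⟫]
      have h3 := mul_le_mul_of_nonneg_left h1 hη0.le
      have e2 : ∀ U : ℝ, η * (1 / (2 * η) * (t ^ 2 * U)) = t ^ 2 * (U / 2) := by
        intro U; field_simp
      rw [e2] at h3
      have h2 : t * (η * r xplus + η * ⟪g - v, z - xplus⟫ - η * r z)
          ≤ t * (t * (‖z - xplus‖ ^ 2 / 2)) := by linarith [h3]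
      exact (mul_le_mul_iff_right₀ ht).mp h2
    have h4 : η * (r xplus + ⟪g - v, z - xplus⟫) ≤ η * (r z) := by
      linarith [key]
    exact (mul_le_mul_iff_right₀ hη0).mp h4
  -- assemble everything
  have hcy := hgrad x y
  have hsx := (abs_le.mp (hfμsmooth x xplus)).2
  have hry := hrsub y
  have hc1 := (abs_le.mp (hfμclose y)).2
  have hc2 := (abs_le.mp (hfμclose xplus)).1
  have hLη : η * L ≤ 1 := (le_div_iff₀ hL).mp hηL
  -- ‖xplus - x‖² = η² ‖g‖²
  have hnorm : ‖xplus - x‖ ^ 2 = η ^ 2 * ‖g‖ ^ 2 := by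
    have h5 : xplus - x = -(η • g) := by rw [hxg]; abel
    rw [h5, norm_neg, norm_smul, mul_pow, Real.norm_eq_abs, sq_abs]
  rw [hnorm] at hsx
  -- key inner product identity
  have hident : ⟪gradient fμ x, y - x⟫ - ⟪gradient fμ x, xplus - x⟫ + ⟪g - v, y - xplus⟫
      = ⟪g, y - x⟫ + η * ‖g‖ ^ 2 + ⟪Δ, xplus - y⟫ := by
    have hη2 : η * ‖g‖ ^ 2 = ⟪g, x - xplus⟫ := by
      rw [← hxg, real_inner_smul_right, real_inner_self_eq_norm_sq]
    rw [hη2, hΔ]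
    simp only [inner_sub_left, inner_sub_right]
    ring
  have hquad : 0 ≤ η / 2 * ‖g‖ ^ 2 * (1 - η * L) :=
    mul_nonneg (mul_nonneg (by linarith) (sq_nonneg _)) (by linarith)
  rw [hF]
  simp only [ge_iff_le]
  linarith [hcy, hsx, hry, hc1, hc2, hident, hquad]
end
end

section
/- Let f_i : ℝ^d → ℝ be convex and L-smooth, let μ > 0, β > 0, and let x* ∈ ℝ^d (in the paper, the minimizer of F = f + r). Then for all x, y ∈ ℝ^d, with u drawn uniformly from the unit sphere of ℝ^d and the same u used in both estimators, E_u[‖∇̂f_i(x; u) − ∇̂f_i(y; u)‖²] ≤ 3d·[(1 + β)·‖∇f_i(x) − ∇f_i(x*)‖² + (1 + 1/β)·‖∇f_i(y) − ∇f_i(x*)‖²] + (3/2)·L²d²μ². -/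
open MeasureTheory
open scoped RealInnerProductSpace

noncomputable section

/-- `ℝ^d` as a Euclidean space. -/
abbrev Euc (d : ℕ) := EuclideanSpace ℝ (Fin d)

/-- The random (two-point) zeroth-order gradient estimator
`∇̂g(x; u) = (d/μ)(g(x + μu) - g(x)) u`. -/
def zoEst {d : ℕ} (μ : ℝ) (g : Euc d → ℝ) (x u : Euc d) : Euc d :=
  (((d : ℝ) / μ) * (g (x + μ • u) - g x)) • u

/-- The uniform probability distribution on the unit sphere of `ℝ^d`, realized as the
pushforward of the normalized Lebesgue measure on the unit ball under radial projection. -/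
def sphereUniform (d : ℕ) : Measure (Euc d) :=
  Measure.map (fun x => ‖x‖⁻¹ • x)
    ((volume (Metric.ball (0 : Euc d) 1))⁻¹ •
      volume.restrict (Metric.ball (0 : Euc d) 1))
lemma norm_sq_eq' (d : ℕ) (x : Euc d) : ‖x‖ ^ 2 = ∑ i, x i ^ 2 := by
  rw [EuclideanSpace.norm_eq, Real.sq_sqrt (Finset.sum_nonneg fun i _ => sq_nonneg _)]; simp [Real.norm_eq_abs, sq_abs]

lemma abs_coord_le (d : ℕ) (x : Euc d) (i : Fin d) : |x i| ≤ ‖x‖ := by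
  have h : (x i) ^ 2 ≤ ‖x‖ ^ 2 := by
    rw [norm_sq_eq']
    exact Finset.single_le_sum (fun j _ => sq_nonneg (x j)) (Finset.mem_univ i)
  calc |x i| = Real.sqrt ((x i) ^ 2) := (Real.sqrt_sq_eq_abs _).symm
    _ ≤ Real.sqrt (‖x‖ ^ 2) := Real.sqrt_le_sqrt h
    _ = ‖x‖ := by rw [Real.sqrt_sq (norm_nonneg x)]

-- integrability

lemma intOn (d : ℕ) (i j : Fin d) :
    IntegrableOn (fun x : Euc d => x i * x j / ‖x‖ ^ 2) (Metric.ball 0 1) volume := by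
  have hmeas : Measurable fun x : Euc d => x i * x j / ‖x‖ ^ 2 :=
    (((EuclideanSpace.proj i).continuous.measurable).mul
      ((EuclideanSpace.proj j).continuous.measurable)).div (measurable_norm.pow_const 2)
  refine Integrable.mono' (g := fun _ => (1:ℝ)) ?_ hmeas.aestronglyMeasurable ?_
  · exact integrable_const_iff.2 (Or.inr (by
      exact ⟨by rw [Measure.restrict_apply_univ]; exact measure_ball_lt_top⟩))
  · refine Filter.Eventually.of_forall fun x => ?_
    rcases eq_or_ne x 0 with rfl | hx
    · simp
    · have hn : 0 < ‖x‖ := norm_pos_iff.2 hx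
      rw [Real.norm_eq_abs, abs_div, abs_mul, abs_pow, abs_norm, div_le_one (by positivity)]
      calc |x i| * |x j| ≤ ‖x‖ * ‖x‖ :=
            mul_le_mul (abs_coord_le d x i) (abs_coord_le d x j) (abs_nonneg _) (norm_nonneg _)
        _ = ‖x‖ ^ 2 := (pow_two _).symm

-- change of variables under a linear isometry equiv preserving the ball

lemma setIntegral_comp_isometry {d : ℕ} (L : Euc d ≃ₗᵢ[ℝ] Euc d) (f : Euc d → ℝ) :
    ∫ x in Metric.ball (0:Euc d) 1, f (L x) = ∫ x in Metric.ball (0:Euc d) 1, f x := by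
  have hL : MeasurePreserving L volume volume := L.measurePreserving
  have hemb : MeasurableEmbedding L :=
    L.toHomeomorph.toMeasurableEquiv.measurableEmbedding
  have hpre : L ⁻¹' (Metric.ball (0:Euc d) 1) = Metric.ball (0:Euc d) 1 := by
    ext z
    simp [Metric.mem_ball, dist_zero_right, L.norm_map]
  rw [← hL.setIntegral_preimage_emb hemb f (Metric.ball 0 1), hpre]

def negAt {d : ℕ} (j : Fin d) : Euc d ≃ₗᵢ[ℝ] Euc d :=
  LinearIsometryEquiv.piLpCongrRight 2
    (fun k => if k = j then LinearIsometryEquiv.neg ℝ else LinearIsometryEquiv.refl ℝ ℝ)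

lemma negAt_apply {d : ℕ} (j : Fin d) (x : Euc d) (k : Fin d) :
    negAt j x k = if k = j then -(x k) else x k := by
  simp only [negAt, LinearIsometryEquiv.piLpCongrRight_apply]
  by_cases h : k = j
  · subst h; simp
  · simp [h]

def swapIso {d : ℕ} (i j : Fin d) : Euc d ≃ₗᵢ[ℝ] Euc d :=
  LinearIsometryEquiv.piLpCongrLeft 2 ℝ ℝ (Equiv.swap i j)

lemma swapIso_apply {d : ℕ} (i j : Fin d) (x : Euc d) (k : Fin d) :
    swapIso i j x k = x (Equiv.swap i j k) := by
  simp [swapIso, LinearIsometryEquiv.piLpCongrLeft_apply, Equiv.piCongrLeft'_apply,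
    Equiv.symm_swap]

lemma cross_zero (d : ℕ) {i j : Fin d} (hij : i ≠ j) :
    ∫ x in Metric.ball (0:Euc d) 1, x i * x j / ‖x‖ ^ 2 = 0 := by
  have key := setIntegral_comp_isometry (negAt j) (fun x : Euc d => x i * x j / ‖x‖ ^ 2)
  have heq : ∀ x : Euc d, (negAt j x) i * (negAt j x) j / ‖negAt j x‖ ^ 2
      = -(x i * x j / ‖x‖ ^ 2) := by
    intro x
    rw [(negAt j).norm_map, negAt_apply, negAt_apply, if_pos rfl, if_neg hij]
    ring
  simp only [heq] at key
  rw [integral_neg] at key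
  linarith

lemma diag_eq (d : ℕ) (i j : Fin d) :
    ∫ x in Metric.ball (0:Euc d) 1, x i * x i / ‖x‖ ^ 2
      = ∫ x in Metric.ball (0:Euc d) 1, x j * x j / ‖x‖ ^ 2 := by
  have key := setIntegral_comp_isometry (swapIso i j) (fun x : Euc d => x j * x j / ‖x‖ ^ 2)
  have heq : ∀ x : Euc d, (swapIso i j x) j * (swapIso i j x) j / ‖swapIso i j x‖ ^ 2
      = x i * x i / ‖x‖ ^ 2 := by
    intro x
    rw [(swapIso i j).norm_map, swapIso_apply, Equiv.swap_apply_right]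
  simp only [heq] at key
  exact key

lemma sum_diag (d : ℕ) (hd : 0 < d) :
    ∑ i : Fin d, ∫ x in Metric.ball (0:Euc d) 1, x i * x i / ‖x‖ ^ 2
      = (volume (Metric.ball (0:Euc d) 1)).toReal := by
  haveI : Nonempty (Fin d) := ⟨⟨0, hd⟩⟩
  haveI : Nontrivial (Euc d) := by infer_instance
  rw [← integral_finset_sum _ (fun i _ => intOn d i i)]
  have hae : ∀ᵐ x ∂(volume.restrict (Metric.ball (0:Euc d) 1)),
      (∑ i : Fin d, x i * x i / ‖x‖ ^ 2) = 1 := by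
    have h0 : ∀ᵐ x ∂(volume.restrict (Metric.ball (0:Euc d) 1)), x ≠ (0:Euc d) := by
      refine ae_restrict_of_ae ?_
      have : (volume : Measure (Euc d)) {0} = 0 := measure_singleton 0
      exact measure_eq_zero_iff_ae_notMem.1 this
    filter_upwards [h0] with x hx
    have hn : ‖x‖ ^ 2 ≠ 0 := pow_ne_zero 2 (norm_ne_zero_iff.2 hx)
    rw [← Finset.sum_div]
    rw [div_eq_one_iff_eq hn, norm_sq_eq']
    exact Finset.sum_congr rfl fun i _ => (pow_two _).symm
  rw [integral_congr_ae hae, setIntegral_const, smul_eq_mul, mul_one]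
  rfl

lemma diag_val (d : ℕ) (hd : 0 < d) (i : Fin d) :
    ∫ x in Metric.ball (0:Euc d) 1, x i * x i / ‖x‖ ^ 2
      = (volume (Metric.ball (0:Euc d) 1)).toReal / d := by
  have hsum := sum_diag d hd
  have hall : ∀ j : Fin d, ∫ x in Metric.ball (0:Euc d) 1, x j * x j / ‖x‖ ^ 2
      = ∫ x in Metric.ball (0:Euc d) 1, x i * x i / ‖x‖ ^ 2 := fun j => diag_eq d j i
  rw [Finset.sum_congr rfl (fun j _ => hall j), Finset.sum_const, Finset.card_univ,
    Fintype.card_fin, nsmul_eq_mul] at hsum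
  rw [← hsum, mul_div_cancel_left₀ _ (Nat.cast_ne_zero.2 hd.ne')]

lemma quad_form (d : ℕ) (hd : 0 < d) (g : Euc d) :
    ∫ x in Metric.ball (0:Euc d) 1, ⟪g, x⟫ ^ 2 / ‖x‖ ^ 2
      = ‖g‖ ^ 2 * (volume (Metric.ball (0:Euc d) 1)).toReal / d := by
  have hpt : ∀ x : Euc d, ⟪g, x⟫ ^ 2 / ‖x‖ ^ 2
      = ∑ i : Fin d, ∑ j : Fin d, g i * g j * (x i * x j / ‖x‖ ^ 2) := by
    intro x
    rw [PiLp.inner_apply]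
    simp only [RCLike.inner_apply, conj_trivial]
    rw [pow_two, Finset.sum_mul_sum, Finset.sum_div]
    refine Finset.sum_congr rfl fun i _ => ?_
    rw [Finset.sum_div]
    exact Finset.sum_congr rfl fun j _ => by ring
  simp only [hpt]
  rw [integral_finset_sum _ (fun i _ => integrable_finset_sum _
    (fun j _ => ((intOn d i j).const_mul _)))]
  have : ∀ i : Fin d, ∫ x in Metric.ball (0:Euc d) 1,
      ∑ j : Fin d, g i * g j * (x i * x j / ‖x‖ ^ 2)
      = g i * g i * ((volume (Metric.ball (0:Euc d) 1)).toReal / d) := by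
    intro i
    rw [integral_finset_sum _ (fun j _ => ((intOn d i j).const_mul _))]
    rw [Finset.sum_eq_single i]
    · rw [MeasureTheory.integral_const_mul, diag_val d hd i]
    · intro j _ hji
      rw [MeasureTheory.integral_const_mul, cross_zero d (Ne.symm hji), mul_zero]
    · intro h; exact absurd (Finset.mem_univ i) h
  simp only [this]
  rw [← Finset.sum_mul, norm_sq_eq']
  rw [Finset.sum_congr rfl (fun i _ => (pow_two (g i)).symm)]
  ring

lemma phi_meas : Measurable fun x : Euc d => ‖x‖⁻¹ • x :=
  (measurable_norm.inv).smul measurable_id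

lemma vol_ball_pos (d : ℕ) : 0 < volume (Metric.ball (0:Euc d) 1) :=
  Metric.measure_ball_pos volume 0 one_pos

lemma vol_ball_ne_top (d : ℕ) : volume (Metric.ball (0:Euc d) 1) ≠ ⊤ :=
  measure_ball_lt_top.ne

instance sphereUniform_prob (d : ℕ) : IsProbabilityMeasure (sphereUniform d) := by
  constructor
  rw [sphereUniform, Measure.map_apply phi_meas MeasurableSet.univ, Set.preimage_univ,
    Measure.smul_apply, Measure.restrict_apply_univ, smul_eq_mul,
    ENNReal.inv_mul_cancel (vol_ball_pos d).ne' (vol_ball_ne_top d)]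

lemma sphereUniform_ae_norm_one (d : ℕ) (hd : 0 < d) :
    ∀ᵐ u ∂(sphereUniform d), ‖u‖ = 1 := by
  haveI : Nonempty (Fin d) := ⟨⟨0, hd⟩⟩
  haveI : Nontrivial (Euc d) := by infer_instance
  rw [sphereUniform]
  have hs : MeasurableSet {u : Euc d | ‖u‖ = 1} :=
    measurable_norm (measurableSet_singleton 1)
  rw [ae_map_iff phi_meas.aemeasurable hs]
  have h0 : ∀ᵐ x ∂((volume (Metric.ball (0 : Euc d) 1))⁻¹ •
      volume.restrict (Metric.ball (0 : Euc d) 1)), x ≠ (0:Euc d) := by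
    exact Measure.ae_smul_measure
      (ae_restrict_of_ae (measure_eq_zero_iff_ae_notMem.1 (measure_singleton 0))) _
  filter_upwards [h0] with x hx
  show ‖‖x‖⁻¹ • x‖ = 1
  rw [norm_smul, norm_inv, norm_norm, inv_mul_cancel₀ (norm_ne_zero_iff.2 hx)]

lemma moment (d : ℕ) (hd : 0 < d) (g : Euc d) :
    ∫ u, ⟪g, u⟫ ^ 2 ∂(sphereUniform d) = ‖g‖ ^ 2 / d := by
  have hcont : Continuous fun u : Euc d => ⟪g, u⟫ ^ 2 :=
    ((innerSL ℝ g).continuous).pow 2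
  rw [sphereUniform, integral_map phi_meas.aemeasurable hcont.aestronglyMeasurable]
  have hpt : ∀ x : Euc d, ⟪g, (‖x‖⁻¹ • x : Euc d)⟫ ^ 2 = ⟪g, x⟫ ^ 2 / ‖x‖ ^ 2 := by
    intro x
    rcases eq_or_ne x 0 with rfl | hx
    · simp
    · rw [real_inner_smul_right]; ring
  simp only [hpt]
  rw [integral_smul_measure, quad_form d hd g, ENNReal.toReal_inv, smul_eq_mul]
  have hV : (volume (Metric.ball (0:Euc d) 1)).toReal ≠ 0 :=
    ENNReal.toReal_ne_zero.2 ⟨(vol_ball_pos d).ne', vol_ball_ne_top d⟩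
  field_simp

lemma scalar_key (s a μ L : ℝ) (h1 : -(L*μ^2) ≤ s - μ*a) (h2 : s - μ*a ≤ L*μ^2) :
    s^2 ≤ 3*μ^2*a^2 + 3/2*L^2*μ^4 := by
  nlinarith [sq_nonneg (3*μ*a - s),
    mul_nonneg (by linarith : (0:ℝ) ≤ L*μ^2 - (s - μ*a)) (by linarith : (0:ℝ) ≤ L*μ^2 + (s - μ*a))]

lemma est_bound {d : ℕ} {L μ : ℝ} (hL : 0 < L) (hμ : 0 < μ) (fi : Euc d → ℝ)
    (hsmooth : ∀ x y, |fi y - fi x - ⟪gradient fi x, y - x⟫| ≤ L / 2 * ‖y - x‖ ^ 2)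
    (x y u : Euc d) (hu : ‖u‖ = 1) :
    ‖zoEst μ fi x u - zoEst μ fi y u‖ ^ 2
      ≤ 3 * d ^ 2 * ⟪gradient fi x - gradient fi y, u⟫ ^ 2
        + 3 / 2 * L ^ 2 * d ^ 2 * μ ^ 2 := by
  set A := fi (x + μ • u) - fi x with hA
  set B := fi (y + μ • u) - fi y with hB
  set a₁ := ⟪gradient fi x, u⟫ with ha₁
  set a₂ := ⟪gradient fi y, u⟫ with ha₂
  have hnormμu : ‖μ • u‖ = μ := by
    rw [norm_smul, hu, Real.norm_eq_abs, abs_of_pos hμ, mul_one]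
  have hx1 : |A - μ * a₁| ≤ L / 2 * μ ^ 2 := by
    have h := hsmooth x (x + μ • u)
    rw [add_sub_cancel_left, real_inner_smul_right, hnormμu] at h
    exact h
  have hy1 : |B - μ * a₂| ≤ L / 2 * μ ^ 2 := by
    have h := hsmooth y (y + μ • u)
    rw [add_sub_cancel_left, real_inner_smul_right, hnormμu] at h
    exact h
  have hdiff : zoEst μ fi x u - zoEst μ fi y u = (((d : ℝ) / μ) * (A - B)) • u := by
    rw [zoEst, zoEst, ← sub_smul, ← hA, ← hB]
    ring_nf
  rw [hdiff, norm_smul, Real.norm_eq_abs, hu, mul_one, sq_abs, inner_sub_left, ← ha₁, ← ha₂]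
  have he : |(A - B) - μ * (a₁ - a₂)| ≤ L * μ ^ 2 := by
    have : (A - B) - μ * (a₁ - a₂) = (A - μ * a₁) - (B - μ * a₂) := by ring
    rw [this]
    calc |(A - μ * a₁) - (B - μ * a₂)| ≤ |A - μ * a₁| + |B - μ * a₂| := abs_sub _ _
      _ ≤ L / 2 * μ ^ 2 + L / 2 * μ ^ 2 := add_le_add hx1 hy1
      _ = L * μ ^ 2 := by ring
  obtain ⟨he1, he2⟩ := abs_le.1 he
  have hkey : (A - B) ^ 2 ≤ 3 * μ ^ 2 * (a₁ - a₂) ^ 2 + 3 / 2 * L ^ 2 * μ ^ 4 := by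
    exact scalar_key (A - B) (a₁ - a₂) μ L he1 he2
  have hμ2 : (0:ℝ) < μ ^ 2 := by positivity
  have : ((d : ℝ) / μ * (A - B)) ^ 2 = (d:ℝ) ^ 2 * (A - B) ^ 2 / μ ^ 2 := by
    field_simp
  rw [this]
  rw [div_le_iff₀ hμ2]
  have hd2 : (0:ℝ) ≤ (d:ℝ) ^ 2 := sq_nonneg _
  nlinarith [mul_le_mul_of_nonneg_left hkey hd2]

lemma beta_split {d : ℕ} {β : ℝ} (hβ : 0 < β) (a b : Euc d) :
    ‖a - b‖ ^ 2 ≤ (1 + β) * ‖a‖ ^ 2 + (1 + 1 / β) * ‖b‖ ^ 2 := by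
  have hns : ‖a - b‖ ^ 2 = ‖a‖ ^ 2 - 2 * ⟪a, b⟫ + ‖b‖ ^ 2 := norm_sub_sq_real a b
  have hab : |⟪a, b⟫| ≤ ‖a‖ * ‖b‖ := abs_real_inner_le_norm a b
  obtain ⟨h1, h2⟩ := abs_le.1 hab
  have h3 : 2 * ‖a‖ * ‖b‖ ≤ (β ^ 2 * ‖a‖ ^ 2 + ‖b‖ ^ 2) / β := by
    rw [le_div_iff₀ hβ]
    nlinarith [sq_nonneg (β * ‖a‖ - ‖b‖)]
  have h4 : (β ^ 2 * ‖a‖ ^ 2 + ‖b‖ ^ 2) / β = β * ‖a‖ ^ 2 + (1 / β) * ‖b‖ ^ 2 := by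
    field_simp
  linarith

/-- Integrability of the squared inner product against the sphere measure. -/
lemma integrable_inner_sq (d : ℕ) (g : Euc d) :
    Integrable (fun u : Euc d => ⟪g, u⟫ ^ 2) (sphereUniform d) := by
  have hc : Continuous fun u : Euc d => ⟪g, u⟫ ^ 2 := ((innerSL ℝ g).continuous).pow 2
  rw [sphereUniform, integrable_map_measure (g := fun u : Euc d => ⟪g, u⟫ ^ 2)
    hc.aestronglyMeasurable phi_meas.aemeasurable]
  have hpt : ((fun u : Euc d => ⟪g, u⟫ ^ 2) ∘ fun x => ‖x‖⁻¹ • x)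
      = fun x : Euc d => ⟪g, x⟫ ^ 2 / ‖x‖ ^ 2 := by
    funext x
    show ⟪g, (‖x‖⁻¹ • x : Euc d)⟫ ^ 2 = ⟪g, x⟫ ^ 2 / ‖x‖ ^ 2
    rcases eq_or_ne x 0 with rfl | hx
    · simp
    · rw [real_inner_smul_right]; ring
  rw [hpt]
  refine Integrable.smul_measure ?_ (by simp [ENNReal.inv_ne_top, (vol_ball_pos d).ne'])
  have h2 : (fun x : Euc d => ⟪g, x⟫ ^ 2 / ‖x‖ ^ 2)
      = fun x : Euc d => ∑ i : Fin d, ∑ j : Fin d, g i * g j * (x i * x j / ‖x‖ ^ 2) := by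
    funext x
    rw [PiLp.inner_apply]
    simp only [RCLike.inner_apply, conj_trivial]
    rw [pow_two, Finset.sum_mul_sum, Finset.sum_div]
    refine Finset.sum_congr rfl fun i _ => ?_
    rw [Finset.sum_div]
    exact Finset.sum_congr rfl fun j _ => by ring
  rw [h2]
  exact integrable_finset_sum _ (fun i _ => integrable_finset_sum _
    (fun j _ => (intOn d i j).const_mul _))

/-- **Second-moment bound for the difference of two random zeroth-order estimates with a
shared direction** (Lemma 4 of the paper). -/
theorem stmt15 (d : ℕ) (L μ β : ℝ) (hL : 0 < L) (hμ : 0 < μ) (hβ : 0 < β)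
    (fi : Euc d → ℝ)
    (hconv : ConvexOn ℝ Set.univ fi) (hdiff : Differentiable ℝ fi)
    (hsmooth : ∀ x y, |fi y - fi x - ⟪gradient fi x, y - x⟫| ≤ L / 2 * ‖y - x‖ ^ 2)
    (xstar : Euc d) (x y : Euc d) :
    ∫ u, ‖zoEst μ fi x u - zoEst μ fi y u‖ ^ 2 ∂(sphereUniform d)
      ≤ 3 * d * ((1 + β) * ‖gradient fi x - gradient fi xstar‖ ^ 2
          + (1 + 1 / β) * ‖gradient fi y - gradient fi xstar‖ ^ 2)
        + 3 / 2 * L ^ 2 * d ^ 2 * μ ^ 2 := by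
  rcases Nat.eq_zero_or_pos d with hd | hd
  · subst hd
    haveI : Subsingleton (Euc 0) := ⟨fun a b => by ext i; exact i.elim0⟩
    have hxy : x = y := Subsingleton.elim x y
    have h0 : (fun u : Euc 0 => ‖zoEst μ fi x u - zoEst μ fi y u‖ ^ 2)
        = fun _ => (0:ℝ) := by
      funext u; rw [hxy, sub_self, norm_zero]; norm_num
    rw [h0, integral_zero]
    have hg1 : gradient fi x - gradient fi xstar = 0 := Subsingleton.elim _ _
    have hg2 : gradient fi y - gradient fi xstar = 0 := Subsingleton.elim _ _
    rw [hg1, hg2]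
    norm_num
  · have hd0 : (d:ℝ) ≠ 0 := Nat.cast_ne_zero.2 hd.ne'
    set gΔ := gradient fi x - gradient fi y with hgΔ
    calc ∫ u, ‖zoEst μ fi x u - zoEst μ fi y u‖ ^ 2 ∂(sphereUniform d)
        ≤ ∫ u, (3 * (d:ℝ) ^ 2 * ⟪gΔ, u⟫ ^ 2 + 3 / 2 * L ^ 2 * d ^ 2 * μ ^ 2)
            ∂(sphereUniform d) := by
          refine integral_mono_of_nonneg (Filter.Eventually.of_forall fun u => sq_nonneg _)
            (((integrable_inner_sq d gΔ).const_mul _).add (integrable_const _)) ?_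
          filter_upwards [sphereUniform_ae_norm_one d hd] with u hu
          exact est_bound hL hμ fi hsmooth x y u hu
      _ = 3 * (d:ℝ) ^ 2 * (‖gΔ‖ ^ 2 / d) + 3 / 2 * L ^ 2 * d ^ 2 * μ ^ 2 := by
          rw [integral_add ((integrable_inner_sq d gΔ).const_mul _) (integrable_const _),
            MeasureTheory.integral_const_mul, moment d hd gΔ, integral_const]
          simp [measure_univ]
      _ = 3 * d * ‖gΔ‖ ^ 2 + 3 / 2 * L ^ 2 * d ^ 2 * μ ^ 2 := by
          field_simp
      _ ≤ 3 * d * ((1 + β) * ‖gradient fi x - gradient fi xstar‖ ^ 2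
            + (1 + 1 / β) * ‖gradient fi y - gradient fi xstar‖ ^ 2)
          + 3 / 2 * L ^ 2 * d ^ 2 * μ ^ 2 := by
          have hb := beta_split hβ (gradient fi x - gradient fi xstar)
            (gradient fi y - gradient fi xstar)
          rw [sub_sub_sub_cancel_right, ← hgΔ] at hb
          have h3d : (0:ℝ) ≤ 3 * d := by positivity
          nlinarith [mul_le_mul_of_nonneg_left hb h3d]
end
end
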